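/- Let K be a field of characteristic 0 and α ∈ K. For the formal Laurent series R_{α,1}(z) = Σ_{k≥0} ((B_{k+1}(α) − B_{k+1})/(k+1)) · (−1)^{k+1}/z^{k+1}, where B_j(x) are Bernoulli polynomials, the forward difference satisfies R_{α,1}(z+1) − R_{α,1}(z) = α/(z(z+α)) as formal Laurent series in 1/z. -/

import Mathlib

open Finset

/-- The Laurent series
`R_{α,1}(z) = Σ_{k≥0} ((B_{k+1}(α) - B_{k+1})/(k+1)) (-1)^{k+1}/z^{k+1}`, modeled as a
power series in `X = 1/z` (the coefficient of `X^m`, `m = k+1 ≥ 1`, is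
`(-1)^m (B_m(α) - B_m)/m`), where `B_m(x)` is the Bernoulli polynomial. -/
noncomputable def Ralpha {K : Type*} [Field K] [CharZero K] (α : K) : PowerSeries K :=
  PowerSeries.mk fun m =>
    if 1 ≤ m then
      (-1 : K) ^ m *
        ((Polynomial.aeval α (Polynomial.bernoulli m) - algebraMap ℚ K (bernoulli m)) / m)
    else 0

/-- The substitution `z ↦ z + 1` on formal Laurent series in `1/z` supported in
`K[[1/z]]`, i.e. `X = 1/z ↦ X(1+X)^{-1}`. -/
noncomputable def shiftOne {K : Type*} [Field K] (f : PowerSeries K) : PowerSeries K :=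
  PowerSeries.mk fun m =>
    ∑ n ∈ range (m + 1),
      (PowerSeries.coeff (R := K) n f) * (-1 : K) ^ (m - n) * ((m - 1).choose (m - n) : K)

lemma auxA {K : Type*} [Field K] [CharZero K] (α : K) (M : ℕ) :
    ∑ j ∈ range (M + 1), ((M + 1).choose j : K) * (Polynomial.aeval α (Polynomial.bernoulli j))
      = (M + 1) * α ^ M := by
  have h2 := congrArg (Polynomial.aeval α) (Polynomial.sum_bernoulli M)
  simp only [map_sum, Polynomial.aeval_monomial, map_smul, Algebra.smul_def,
    map_natCast] at h2
  simpa [mul_comm] using h2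

lemma auxB {K : Type*} [Field K] [CharZero K] (M : ℕ) (hM : 1 ≤ M) :
    ∑ j ∈ range (M + 1), ((M + 1).choose j : K) * (algebraMap ℚ K (bernoulli j)) = 0 := by
  have h := sum_bernoulli (M + 1)
  rw [if_neg (by omega : M + 1 ≠ 1)] at h
  have h2 := congrArg (algebraMap ℚ K) h
  simp only [map_sum, map_mul, map_natCast, map_zero] at h2
  simpa using h2

lemma auxC {K : Type*} [Field K] [CharZero K] (α : K) (M : ℕ) (hM : 1 ≤ M) :
    ∑ k ∈ range M, (M.choose k : K) *
      ((Polynomial.aeval α (Polynomial.bernoulli (k + 1))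
        - algebraMap ℚ K (bernoulli (k + 1))) / (k + 1)) = α ^ M := by
  set Δ : ℕ → K := fun j => Polynomial.aeval α (Polynomial.bernoulli j)
    - algebraMap ℚ K (bernoulli j) with hΔ
  have hsum : ∑ k ∈ range M, ((M + 1).choose (k + 1) : K) * Δ (k + 1) = (M + 1) * α ^ M := by
    have hsplit := Finset.sum_range_succ' (fun j => ((M + 1).choose j : K) * Δ j) M
    have hΔ0 : Δ 0 = 0 := by
      simp [hΔ, Polynomial.bernoulli_zero, bernoulli_zero]
    have hfull : ∑ j ∈ range (M + 1), ((M + 1).choose j : K) * Δ j = (M + 1) * α ^ M := by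
      simp only [hΔ, mul_sub]
      rw [Finset.sum_sub_distrib, auxA, auxB M hM, sub_zero]
    rw [hsplit, hΔ0, mul_zero, add_zero] at hfull
    exact hfull
  have key : ∀ k ∈ range M, (M.choose k : K) * (Δ (k + 1) / (k + 1)) =
      (((M + 1).choose (k + 1) : K) * Δ (k + 1)) / (M + 1) := by
    intro k _
    have hn : (M + 1) * M.choose k = (M + 1).choose (k + 1) * (k + 1) :=
      Nat.add_one_mul_choose_eq M k
    have hnK : ((M : K) + 1) * (M.choose k : K)
        = ((M + 1).choose (k + 1) : K) * ((k : K) + 1) := by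
      exact_mod_cast congrArg (Nat.cast : ℕ → K) hn
    have h1 : ((k : K) + 1) ≠ 0 := Nat.cast_add_one_ne_zero k
    have h2 : ((M : K) + 1) ≠ 0 := Nat.cast_add_one_ne_zero M
    field_simp
    linear_combination Δ (k + 1) * hnK
  calc ∑ k ∈ range M, (M.choose k : K) * (Δ (k + 1) / (k + 1))
      = ∑ k ∈ range M, (((M + 1).choose (k + 1) : K) * Δ (k + 1)) / (M + 1) :=
        Finset.sum_congr rfl key
    _ = (∑ k ∈ range M, ((M + 1).choose (k + 1) : K) * Δ (k + 1)) / (M + 1) := by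
        rw [Finset.sum_div]
    _ = ((M : K) + 1) * α ^ M / ((M : K) + 1) := by rw [hsum]
    _ = α ^ M := by
        rw [mul_comm, mul_div_assoc, div_self (Nat.cast_add_one_ne_zero M), mul_one]


/-- `R_{α,1}(z+1) - R_{α,1}(z) = α/(z(z+α)) = 1/z - 1/(z+α)` as formal Laurent series
in `1/z`, where `1/(z+α) = Σ_{n≥0} (-α)^n / z^{n+1}`. -/
theorem bdiff_Ralpha {K : Type*} [Field K] [CharZero K] (α : K) :
    shiftOne (Ralpha α) - Ralpha α =
      PowerSeries.X - PowerSeries.mk (fun m => if 1 ≤ m then (-α) ^ (m - 1) else 0) := by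
  ext m
  simp only [map_sub, shiftOne, Ralpha, PowerSeries.coeff_mk, PowerSeries.coeff_X]
  match m with
  | 0 => simp
  | (M + 1) =>
    set Δ : ℕ → K := fun j => Polynomial.aeval α (Polynomial.bernoulli j)
      - algebraMap ℚ K (bernoulli j) with hΔ
    -- split off n = 0 term and n = M+1 term
    rw [Finset.sum_range_succ' (fun n =>
      (if 1 ≤ n then (-1 : K) ^ n * (Δ n / n) else 0) * (-1 : K) ^ (M + 1 - n)
        * ((M + 1 - 1).choose (M + 1 - n) : K)) (M + 1)]
    simp only [Nat.le_add_left 1, if_pos, Nat.add_sub_cancel, if_neg (by omega : ¬ 1 ≤ 0)]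
    rw [Finset.sum_range_succ]
    simp only [Nat.sub_self, pow_zero, Nat.choose_zero_right, Nat.cast_one, mul_one]
    rcases Nat.eq_zero_or_pos M with hM | hM
    · subst hM
      simp [hΔ, bernoulli_one]
    · have hMge : 1 ≤ M := hM
      have hmain : ∑ k ∈ range M,
          (-1 : K) ^ (k + 1) * (Δ (k + 1) / (k + 1)) * (-1 : K) ^ (M - k)
            * ((M).choose (M - k) : K) = (-1 : K) ^ (M + 1) * α ^ M := by
        have step : ∀ k ∈ range M,
            (-1 : K) ^ (k + 1) * (Δ (k + 1) / (k + 1)) * (-1 : K) ^ (M - k)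
              * ((M).choose (M - k) : K)
            = (-1 : K) ^ (M + 1) * ((M.choose k : K) * (Δ (k + 1) / (k + 1))) := by
          intro k hk
          have hkM : k < M := Finset.mem_range.mp hk
          have h2 : M.choose (M - k) = M.choose k := Nat.choose_symm (by omega : k ≤ M)
          have h3 : (-1 : K) ^ (M + 1) = (-1 : K) ^ (k + 1) * (-1 : K) ^ (M - k) := by
            rw [← pow_add]; congr 1; omega
          rw [h2, h3]
          ring
        rw [Finset.sum_congr rfl step, ← Finset.mul_sum]
        congr 1
        exact auxC α M hMge
      push_cast
      rw [hmain]
      rw [if_neg (by omega : ¬ M = 0)]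
      simp only [hΔ]
      rw [neg_pow]

      ring
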